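/- arXiv:2605.22596 — 2 statements merged into one kernel-verified Lean document; each statement's English description precedes it below -/
import Mathlib

section
/- Let g : ℝⁿ → ℝ be twice continuously differentiable with |g(x)| ≤ G for all x and with the operator norm of its Hessian bounded by M everywhere, for constants G ≥ 0, M > 0. Then the gradient satisfies ‖∇g(x)‖ ≤ 2√(G·M) for every x. -/
open scoped RealInnerProductSpace

theorem stmt0 {n : ℕ} (g : EuclideanSpace ℝ (Fin n) → ℝ) (G M : ℝ)
    (hG : 0 ≤ G) (hM : 0 < M)
    (hg : ContDiff ℝ 2 g)
    (hbound : ∀ x, |g x| ≤ G)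
    (hHess : ∀ x, ‖iteratedFDeriv ℝ 2 g x‖ ≤ M) :
    ∀ x, ‖gradient g x‖ ≤ 2 * Real.sqrt (G * M) := by
  intro x
  by_cases hz : gradient g x = 0
  · rw [hz, norm_zero]; positivity
  have hdg : Differentiable ℝ g := hg.differentiable two_ne_zero
  have hdf : Differentiable ℝ (fderiv ℝ g) :=
    (hg.fderiv_right (m := 1) le_rfl).differentiable one_ne_zero
  -- Lipschitz bound on the derivative
  have lip : ∀ y z, ‖fderiv ℝ g y - fderiv ℝ g z‖ ≤ M * ‖y - z‖ := by
    intro y z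
    refine convex_univ.norm_image_sub_le_of_norm_fderiv_le (fun w _ => hdf w)
      (fun w _ => ?_) trivial trivial
    calc ‖fderiv ℝ (fderiv ℝ g) w‖
        = ‖iteratedFDeriv ℝ 0 (fderiv ℝ (fderiv ℝ g)) w‖ := by rw [norm_iteratedFDeriv_zero]
      _ = ‖iteratedFDeriv ℝ 1 (fderiv ℝ g) w‖ := norm_iteratedFDeriv_fderiv
      _ = ‖iteratedFDeriv ℝ 2 g w‖ := norm_iteratedFDeriv_fderiv
      _ ≤ M := hHess w
  set grad := gradient g x with hgrad
  set u : EuclideanSpace ℝ (Fin n) := ‖grad‖⁻¹ • grad with hu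
  have hgn : 0 < ‖grad‖ := norm_pos_iff.mpr hz
  have hun : ‖u‖ = 1 := by
    rw [hu, norm_smul, norm_inv, norm_norm, inv_mul_cancel₀ hgn.ne']
  have hfx : fderiv ℝ g x u = ‖grad‖ := by
    have h : fderiv ℝ g x u = (inner ℝ grad u : ℝ) :=
      (InnerProductSpace.toDual_symm_apply).symm
    rw [h, hu, real_inner_smul_right, real_inner_self_eq_norm_sq]
    field_simp
  -- the function along the line
  set φ : ℝ → ℝ := fun t => g (x + t • u) with hφ
  have hφ' : ∀ t : ℝ, HasDerivAt φ (fderiv ℝ g (x + t • u) u) t := by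
    intro t
    have h1 : HasDerivAt (fun t : ℝ => x + t • u) u t := by
      simpa using ((hasDerivAt_id t).smul_const u).const_add x
    exact (hdg (x + t • u)).hasFDerivAt.comp_hasDerivAt t h1
  set F : ℝ → ℝ := fun t => φ 0 + t * fderiv ℝ g x u - φ t with hF
  have hF' : ∀ t : ℝ, HasDerivAt F (fderiv ℝ g x u - fderiv ℝ g (x + t • u) u) t := by
    intro t
    exact ((hasDerivAt_mul_const (fderiv ℝ g x u)).const_add (φ 0)).sub (hφ' t)
  have hF'bound : ∀ t : ℝ, 0 ≤ t → fderiv ℝ g x u - fderiv ℝ g (x + t • u) u ≤ M * t := by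
    intro t ht
    have h1 : |fderiv ℝ g x u - fderiv ℝ g (x + t • u) u| ≤ M * t := by
      have h2 : fderiv ℝ g x u - fderiv ℝ g (x + t • u) u
          = (fderiv ℝ g x - fderiv ℝ g (x + t • u)) u := by simp
      rw [h2]
      calc |(fderiv ℝ g x - fderiv ℝ g (x + t • u)) u|
          ≤ ‖fderiv ℝ g x - fderiv ℝ g (x + t • u)‖ * ‖u‖ :=
            (fderiv ℝ g x - fderiv ℝ g (x + t • u)).le_opNorm u
        _ ≤ (M * ‖x - (x + t • u)‖) * 1 := by
            rw [hun]; exact mul_le_mul_of_nonneg_right (lip _ _) zero_le_one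
        _ = M * t := by
            rw [mul_one]
            have h3 : x - (x + t • u) = -(t • u) := by abel
            rw [h3, norm_neg, norm_smul, hun, mul_one, Real.norm_eq_abs, abs_of_nonneg ht]
    exact (abs_le.mp h1).2
  -- fencing argument: F T ≤ M/2 * T^2
  have key : ∀ T : ℝ, 0 < T → ‖grad‖ * T ≤ 2 * G + M / 2 * T ^ 2 := by
    intro T hT
    have fence : F T ≤ M / 2 * T ^ 2 := by
      have h := image_le_of_deriv_right_le_deriv_boundary
        (f := F) (f' := fun t => fderiv ℝ g x u - fderiv ℝ g (x + t • u) u)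
        (a := 0) (b := T) (B := fun t => M / 2 * t ^ 2) (B' := fun t => M * t)
        (fun t _ => (hF' t).continuousAt.continuousWithinAt)
        (fun t _ => (hF' t).hasDerivWithinAt)
        (by simp [hF, hφ])
        (by fun_prop)
        (fun t _ => by
          have h4 : HasDerivAt (fun t : ℝ => M / 2 * t ^ 2) (M * t) t := by
            have h5 := (hasDerivAt_pow 2 t).const_mul (M / 2)
            exact h5.congr_deriv (by push_cast; ring)
          exact h4.hasDerivWithinAt)
        (fun t ht => hF'bound t ht.1)
      exact h (Set.right_mem_Icc.mpr hT.le)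
    have hFT : F T = g x + T * ‖grad‖ - g (x + T • u) := by
      rw [hF, hfx, hφ]; simp
    rw [hFT] at fence
    have h3 := abs_le.mp (hbound (x + T • u))
    have h4 := abs_le.mp (hbound x)
    nlinarith
  -- conclude
  rcases eq_or_lt_of_le hG with hG0 | hG0
  · -- G = 0
    have h0 : ‖grad‖ ≤ 0 := by
      refine le_of_forall_pos_le_add fun ε hε => ?_
      have hT : (0 : ℝ) < 2 * ε / M := by positivity
      have h := key _ hT
      rw [← hG0] at h
      have heq : M / 2 * (2 * ε / M) ^ 2 = ε * (2 * ε / M) := by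
        field_simp
      rw [heq] at h
      have := (mul_le_mul_iff_of_pos_right hT).mp (by linarith : ‖grad‖ * (2 * ε / M) ≤ ε * (2 * ε / M))
      linarith
    linarith [hgn]
  · -- G > 0
    set s : ℝ := Real.sqrt (G / M) with hs
    have hs0 : 0 < s := Real.sqrt_pos.mpr (by positivity)
    have hs2 : s ^ 2 = G / M := Real.sq_sqrt (by positivity)
    have hMs : M * s ^ 2 = G := by rw [hs2]; field_simp
    have hsqrt : Real.sqrt (G * M) = M * s := by
      rw [show G * M = (M * s) ^ 2 by nlinarith]
      exact Real.sqrt_sq (by positivity)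
    have hkey := key (2 * s) (by positivity)
    rw [hsqrt]
    nlinarith [mul_pos hs0 hs0]
end

section
/- Let p be a positive joint density over (a, z₁,…,z_K) with a ∈ ℝⁿ, twice differentiable in a. Suppose the interaction log-ratio g(z, a) = log(p(z|a)/∏ᵢ p(zᵢ|a)) satisfies |g(z, a)| ≤ G and ‖∇_a² g(z, a)‖_op ≤ M for all (z, a). Then for all (z, a), ‖∇_a log p(a|z) − s_comp(a, z)‖ ≤ 2√(G·M), where s_comp(a,z) = ∇_a log p(a) + Σᵢ (∇_a log p(a|zᵢ) − ∇_a log p(a)). -/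
open InnerProductSpace

section Landau
variable {E : Type*} [NormedAddCommGroup E] [InnerProductSpace ℝ E] [CompleteSpace E]

lemma landau_bound (g : E → ℝ) (hg : ContDiff ℝ 2 g) {G M : ℝ} (hG : 0 ≤ G) (hM : 0 < M)
    (hb : ∀ x, |g x| ≤ G) (hH : ∀ x, ‖iteratedFDeriv ℝ 2 g x‖ ≤ M) (a : E) :
    ‖gradient g a‖ ≤ 2 * Real.sqrt (G * M) := by
  have hdg : Differentiable ℝ g := hg.differentiable (by norm_num)
  have hdg1 : ContDiff ℝ 1 (fderiv ℝ g) := hg.fderiv_right (by norm_num)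
  have key : ∀ u : E, ‖fderiv ℝ (fderiv ℝ g) u‖ ≤ M := by
    intro u
    have h1 : ‖iteratedFDeriv ℝ 2 g u‖ = ‖fderiv ℝ (fderiv ℝ g) u‖ := by
      rw [← norm_iteratedFDeriv_fderiv (n := 1), ← norm_iteratedFDeriv_fderiv (n := 0),
        norm_iteratedFDeriv_zero]
    rw [← h1]; exact hH u
  have hlip : ∀ x y : E, ‖fderiv ℝ g x - fderiv ℝ g y‖ ≤ M * ‖x - y‖ := by
    intro x y
    exact convex_univ.norm_image_sub_le_of_norm_fderiv_le
      (fun u _ => (hdg1.differentiable (by norm_num)).differentiableAt)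
      (fun u _ => key u) (Set.mem_univ y) (Set.mem_univ x)
  have taylor : ∀ v : E, ‖g (a + v) - g a - fderiv ℝ g a v‖ ≤ M * ‖v‖ ^ 2 := by
    intro v
    have seg : ∀ x ∈ segment ℝ a (a + v), ‖fderiv ℝ g x - fderiv ℝ g a‖ ≤ M * ‖v‖ := by
      intro x hx
      obtain ⟨u, t, hu, ht, hsum, hx⟩ := hx
      have hx' : x = a + t • v := by
        rw [← hx, smul_add, ← add_assoc, ← add_smul, hsum, one_smul]
      have hxa : ‖x - a‖ ≤ ‖v‖ := by
        rw [hx', add_sub_cancel_left, norm_smul, Real.norm_eq_abs, abs_of_nonneg ht]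
        nlinarith [norm_nonneg v, hsum, hu]
      calc ‖fderiv ℝ g x - fderiv ℝ g a‖ ≤ M * ‖x - a‖ := hlip x a
        _ ≤ M * ‖v‖ := by nlinarith
    have h := (convex_segment a (a + v)).norm_image_sub_le_of_norm_fderiv_le'
      (fun x _ => hdg.differentiableAt) seg (left_mem_segment ℝ a (a + v))
      (right_mem_segment ℝ a (a + v))
    simpa [add_sub_cancel_left, sq, mul_assoc] using h
  by_cases hs : gradient g a = 0
  · rw [hs, norm_zero]; positivity
  have hGpos : 0 < G := by
    rcases hG.lt_or_eq with h | h; · exact h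
    exfalso; apply hs
    have hg0 : g = fun _ => (0 : ℝ) := funext fun x => abs_nonpos_iff.mp (h ▸ hb x)
    rw [hg0]; exact gradient_const a 0
  set s := gradient g a with hsdef
  set t := Real.sqrt (G / M) with htdef
  have ht : 0 < t := Real.sqrt_pos.mpr (div_pos hGpos hM)
  have ht2 : t ^ 2 = G / M := Real.sq_sqrt (div_pos hGpos hM).le
  have hsn : 0 < ‖s‖ := norm_pos_iff.mpr hs
  set v := (t * ‖s‖⁻¹) • s with hvdef
  have hnv : ‖v‖ = t := by
    rw [hvdef, norm_smul, Real.norm_eq_abs, abs_of_pos (by positivity)]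
    field_simp
  have hinner : ∀ w : E, fderiv ℝ g a w = ⟪s, w⟫_ℝ := fun w =>
    (InnerProductSpace.toDual_symm_apply (𝕜 := ℝ)).symm
  have hfv : fderiv ℝ g a v = t * ‖s‖ := by
    rw [hinner v, hvdef, real_inner_smul_right, real_inner_self_eq_norm_sq]
    field_simp
  have h1 := taylor v
  have h2 := taylor (-v)
  rw [map_neg] at h2
  rw [hnv] at h1
  rw [norm_neg, hnv] at h2
  have hb1 := hb (a + v)
  have hb2 := hb (a + -v)
  have hmain : t * ‖s‖ ≤ 2 * G := by
    have := abs_sub_abs_le_abs_sub (g (a + v)) (g (a + -v))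
    rw [hfv] at h1 h2
    have e1 : |g (a + v) - g a - t * ‖s‖| ≤ M * t ^ 2 := by
      calc |g (a + v) - g a - t * ‖s‖| = ‖g (a + v) - g a - t * ‖s‖‖ := rfl
        _ ≤ M * t ^ 2 := h1
    have e2 : |g (a + -v) - g a + t * ‖s‖| ≤ M * t ^ 2 := by
      calc |g (a + -v) - g a + t * ‖s‖| = ‖g (a + -v) - g a - -(t * ‖s‖)‖ := by rw [sub_neg_eq_add, Real.norm_eq_abs]
        _ ≤ M * t ^ 2 := h2
    have hMt : M * t ^ 2 = G := by rw [ht2]; field_simp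
    rw [hMt] at e1 e2
    have := abs_le.mp e1
    have := abs_le.mp e2
    have := abs_le.mp (hb1)
    have := abs_le.mp (hb2)
    linarith [(abs_le.mp e1).2, (abs_le.mp e2).1, (abs_le.mp hb1).1, (abs_le.mp hb1).2,
      (abs_le.mp hb2).1, (abs_le.mp hb2).2]
  have hut : Real.sqrt (G * M) * t = G := by
    rw [htdef, ← Real.sqrt_mul (by positivity)]
    rw [show G * M * (G / M) = G ^ 2 by field_simp]
    exact Real.sqrt_sq hG
  -- from t * ‖s‖ ≤ 2 * G = 2 * sqrt(G*M) * t
  have : t * ‖s‖ ≤ 2 * Real.sqrt (G * M) * t := by rw [mul_assoc, hut]; linarith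
  nlinarith
end Landau

noncomputable def interactionLogRatio {n K : ℕ} {Z : Fin K → Type*}
    [∀ i, Fintype (Z i)] [∀ i, DecidableEq (Z i)]
    (p : EuclideanSpace ℝ (Fin n) → (∀ i, Z i) → ℝ)
    (z : ∀ i, Z i) (a : EuclideanSpace ℝ (Fin n)) : ℝ :=
  Real.log ((p a z / ∑ z', p a z') /
    ∏ i, ((∑ z' ∈ Finset.univ.filter (fun z'' => z'' i = z i), p a z') /
      ∑ z', p a z'))


theorem stmt16 {n K : ℕ} {Z : Fin K → Type*}
    [∀ i, Fintype (Z i)] [∀ i, DecidableEq (Z i)]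
    (p : EuclideanSpace ℝ (Fin n) → (∀ i, Z i) → ℝ)
    (hpos : ∀ a z, 0 < p a z)
    (hdiff : ∀ z, ContDiff ℝ 2 (fun a => p a z))
    (G M : ℝ) (hG : 0 ≤ G) (hM : 0 < M)
    (hg2 : ∀ z, ContDiff ℝ 2 (interactionLogRatio p z))
    (hgb : ∀ z a, |interactionLogRatio p z a| ≤ G)
    (hHess : ∀ z a, ‖iteratedFDeriv ℝ 2 (interactionLogRatio p z) a‖ ≤ M) :
    ∀ (z : ∀ i, Z i) (a : EuclideanSpace ℝ (Fin n)),
      ‖gradient (fun a => Real.log (p a z)) a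
        - (gradient (fun a => Real.log (∑ z', p a z')) a
           + ∑ i, (gradient (fun a =>
                Real.log (∑ z' ∈ Finset.univ.filter (fun z'' => z'' i = z i),
                  p a z')) a
              - gradient (fun a => Real.log (∑ z', p a z')) a))‖
      ≤ 2 * Real.sqrt (G * M) := by
  intro z a
  have hne : Nonempty (∀ i, Z i) := ⟨z⟩
  set S : EuclideanSpace ℝ (Fin n) → ℝ := fun a => ∑ z', p a z' with hSdef
  set m : Fin K → EuclideanSpace ℝ (Fin n) → ℝ := fun i a =>
    ∑ z' ∈ Finset.univ.filter (fun z'' => z'' i = z i), p a z' with hmdef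
  have hS : ∀ a, 0 < S a := fun a => Finset.sum_pos (fun _ _ => hpos a _) Finset.univ_nonempty
  have hm : ∀ i a, 0 < m i a := fun i a =>
    Finset.sum_pos (fun _ _ => hpos a _) ⟨z, by simp⟩
  have hdS : ContDiff ℝ 2 S := ContDiff.sum fun z' _ => hdiff z'
  have hdm : ∀ i, ContDiff ℝ 2 (m i) := fun i => ContDiff.sum fun z' _ => hdiff z'
  have hfun : interactionLogRatio p z = fun a =>
      Real.log (p a z) - Real.log (S a) - ∑ i, (Real.log (m i a) - Real.log (S a)) := by
    funext a
    unfold interactionLogRatio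
    rw [Real.log_div (ne_of_gt (div_pos (hpos a z) (hS a)))
        (ne_of_gt (Finset.prod_pos fun i _ => div_pos (hm i a) (hS a))),
      Real.log_div (ne_of_gt (hpos a z)) (ne_of_gt (hS a)),
      Real.log_prod (fun i _ => ne_of_gt (div_pos (hm i a) (hS a)))]
    congr 1
    exact Finset.sum_congr rfl fun i _ => Real.log_div (ne_of_gt (hm i a)) (ne_of_gt (hS a))
  have hA : ∀ x, DifferentiableAt ℝ (fun a => Real.log (p a z)) x := fun x =>
    (((hdiff z).differentiable (by norm_num)) x).log (ne_of_gt (hpos x z))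
  have hB : ∀ x, DifferentiableAt ℝ (fun a => Real.log (S a)) x := fun x =>
    ((hdS.differentiable (by norm_num)) x).log (ne_of_gt (hS x))
  have hC : ∀ i x, DifferentiableAt ℝ (fun a => Real.log (m i a)) x := fun i x =>
    (((hdm i).differentiable (by norm_num)) x).log (ne_of_gt (hm i x))
  have hf : fderiv ℝ (interactionLogRatio p z) a =
      fderiv ℝ (fun a => Real.log (p a z)) a -
        (fderiv ℝ (fun a => Real.log (S a)) a +
          ∑ i, (fderiv ℝ (fun a => Real.log (m i a)) a -
            fderiv ℝ (fun a => Real.log (S a)) a)) := by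
    rw [hfun]
    rw [fderiv_fun_sub ((hA a).fun_sub (hB a))
        (DifferentiableAt.fun_sum fun i _ => ((hC i a).fun_sub (hB a))),
      fderiv_fun_sub (hA a) (hB a),
      fderiv_fun_sum (fun i _ => ((hC i a).fun_sub (hB a)))]
    have : ∑ i, fderiv ℝ (fun a => Real.log (m i a) - Real.log (S a)) a =
        ∑ i, (fderiv ℝ (fun a => Real.log (m i a)) a -
          fderiv ℝ (fun a => Real.log (S a)) a) :=
      Finset.sum_congr rfl fun i _ => fderiv_fun_sub (hC i a) (hB a)
    rw [this]
    abel
  have hgrad : gradient (fun a => Real.log (p a z)) a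
        - (gradient (fun a => Real.log (S a)) a
           + ∑ i, (gradient (fun a => Real.log (m i a)) a
              - gradient (fun a => Real.log (S a)) a))
      = gradient (interactionLogRatio p z) a := by
    simp only [gradient, hf, map_sub, map_add, map_sum]
  calc ‖gradient (fun a => Real.log (p a z)) a
        - (gradient (fun a => Real.log (S a)) a
           + ∑ i, (gradient (fun a => Real.log (m i a)) a
              - gradient (fun a => Real.log (S a)) a))‖
      = ‖gradient (interactionLogRatio p z) a‖ := by rw [hgrad]
    _ ≤ 2 * Real.sqrt (G * M) :=
        landau_bound _ (hg2 z) hG hM (hgb z) (hHess z) a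
end
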